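/- Let T be an operator of the form T = A ⊕ [[B,C],[0,-B]] where A, B are normal and C is a positive injective operator commuting with B. If T is hyponormal, then C = 0 and T is normal. -/

import Mathlib

open ContinuousLinearMap

/-- An operator is hyponormal if `T*T - TT*` is positive. -/
def Hyponormal {H : Type*} [NormedAddCommGroup H] [InnerProductSpace ℂ H] [CompleteSpace H]
    (T : H →L[ℂ] H) : Prop :=
  (star T * T - T * star T).IsPositive

/-- Let `T = A ⊕ [[B,C],[0,-B]]` where `A, B` are normal and `C` is a positive injective
operator commuting with `B`. If `T` is hyponormal, then `C = 0` and `T` is normal. -/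
theorem hyponormal_sqrt_normal_is_normal
    {H₁ H₂ : Type*} [NormedAddCommGroup H₁] [InnerProductSpace ℂ H₁] [CompleteSpace H₁]
    [NormedAddCommGroup H₂] [InnerProductSpace ℂ H₂] [CompleteSpace H₂]
    (A : H₁ →L[ℂ] H₁) (B C : H₂ →L[ℂ] H₂)
    (hA : IsStarNormal A) (hB : IsStarNormal B)
    (hC : C.IsPositive) (hCinj : Function.Injective C) (hBC : B * C = C * B)
    (T : WithLp 2 (H₁ × WithLp 2 (H₂ × H₂)) →L[ℂ] WithLp 2 (H₁ × WithLp 2 (H₂ × H₂)))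
    (hT : ∀ (x : H₁) (y z : H₂),
      T ((WithLp.equiv 2 (H₁ × WithLp 2 (H₂ × H₂))).symm
          (x, (WithLp.equiv 2 (H₂ × H₂)).symm (y, z))) =
        (WithLp.equiv 2 (H₁ × WithLp 2 (H₂ × H₂))).symm
          (A x, (WithLp.equiv 2 (H₂ × H₂)).symm (B y + C z, -(B z))))
    (hhypo : Hyponormal T) :
    C = 0 ∧ IsStarNormal T := by
  classical
  set mk : H₁ → H₂ → H₂ → WithLp 2 (H₁ × WithLp 2 (H₂ × H₂)) := fun x y z =>
    (WithLp.equiv 2 (H₁ × WithLp 2 (H₂ × H₂))).symm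
      (x, (WithLp.equiv 2 (H₂ × H₂)).symm (y, z)) with hmk
  have hinner : ∀ (x x' : H₁) (y y' z z' : H₂),
      inner ℂ (mk x y z) (mk x' y' z')
        = inner ℂ x x' + inner ℂ y y' + inner ℂ z z' := by
    intro x x' y y' z z'
    simp only [hmk, WithLp.prod_inner_apply, WithLp.equiv_symm_apply, WithLp.ofLp_toLp]
    ring
  have hCsym : ∀ u v : H₂, inner ℂ (C u) v = inner ℂ u (C v) :=
    fun u v => hC.1 u v
  -- adjoint formula
  have hstar : ∀ (x : H₁) (y z : H₂),
      star T (mk x y z) = mk (adjoint A x) (adjoint B y) (C y - adjoint B z) := by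
    intro x y z
    apply ext_inner_right ℂ
    intro w
    have hw : w = mk w.fst w.snd.fst w.snd.snd := rfl
    rw [star_eq_adjoint, adjoint_inner_left, hw, hT, hinner, hinner,
      adjoint_inner_left, adjoint_inner_left, inner_sub_left, adjoint_inner_left,
      hCsym, inner_add_right, inner_neg_right]
    ring
  -- C = 0 pointwise
  have key : ∀ y : H₂, C y = 0 := by
    intro y
    have h := hhypo.2 (mk 0 y 0)
    rw [ContinuousLinearMap.reApplyInnerSelf_apply, ContinuousLinearMap.sub_apply,
      ContinuousLinearMap.mul_apply, ContinuousLinearMap.mul_apply] at h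
    have hTv : T (mk 0 y 0) = mk 0 (B y) 0 := by
      rw [show (mk 0 y 0 : WithLp 2 (H₁ × WithLp 2 (H₂ × H₂)))
          = mk (0 : H₁) y (0 : H₂) from rfl, hT]
      simp [hmk]
    have h1 : star T (T (mk 0 y 0)) = mk 0 (adjoint B (B y)) (C (B y)) := by
      rw [hTv, hstar]
      simp [hmk]
    have h2 : T (star T (mk 0 y 0)) = mk 0 (B (adjoint B y) + C (C y)) (-(B (C y))) := by
      have e1 : star T (mk 0 y 0) = mk 0 (adjoint B y) (C y) := by
        rw [hstar]; simp only [map_zero, sub_zero]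
      rw [e1, hT]; simp only [map_zero]; rfl
    have hBn : adjoint B (B y) = B (adjoint B y) :=
      DFunLike.congr_fun hB.star_comm_self.eq y
    rw [h1, h2, inner_sub_left, hinner, hinner, hBn] at h
    simp only [inner_zero_left, inner_zero_right, inner_add_left, add_zero, zero_add] at h
    rw [hCsym (C y) y, sub_add_eq_sub_sub, sub_self, zero_sub, map_neg] at h
    exact (re_inner_self_nonpos (𝕜 := ℂ)).mp (by linarith)
  have hzero : ∀ y : H₂, y = 0 := fun y => hCinj (by rw [key y, map_zero])
  have hC0 : C = 0 := by ext y; simp [key y]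
  refine ⟨hC0, ⟨?_⟩⟩
  have hcomm : star T * T = T * star T := by
    ext w
    have hw : w = mk w.fst w.snd.fst w.snd.snd := rfl
    rw [ContinuousLinearMap.mul_apply, ContinuousLinearMap.mul_apply, hw, hT, hstar,
      hstar, hT]
    have hA1 : adjoint A (A w.fst) = A (adjoint A w.fst) :=
      DFunLike.congr_fun hA.star_comm_self.eq w.fst
    rw [hA1, (hzero (adjoint B (B w.snd.fst + C w.snd.snd))).trans
        (hzero (B (adjoint B w.snd.fst) + C (C w.snd.fst - adjoint B w.snd.snd))).symm,
      (hzero (C (B w.snd.fst + C w.snd.snd) - adjoint B (-(B w.snd.snd)))).trans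
        (hzero (-(B (C w.snd.fst - adjoint B w.snd.snd)))).symm]
  exact hcomm
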